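/- There is an absolute constant c₀ > 0 such that the following holds. Let d ≥ 2 be an integer and let D_1, …, D_m ⊆ ℝ² (with 1 ≤ m ≤ d) be closed disks with radii ρ_1, …, ρ_m ∈ (0,1] satisfying ρ_m = 1, whose open interiors are pairwise disjoint and each disjoint from the open unit disk centered at the origin, such that D_1 intersects the closed unit disk centered at the origin and D_{i+1} intersects D_i for each 1 ≤ i ≤ m−1. Then μ(D_1 ∪ … ∪ D_m) ≥ c₀·(ln d)²/d. -/

import Mathlib

open Metric MeasureTheory

/-- The measure on the plane with density `1/‖x‖²` with respect to Lebesgue measure. -/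
noncomputable def mu : Measure (EuclideanSpace ℝ (Fin 2)) :=
  volume.withDensity fun x => ENNReal.ofReal (1 / ‖x‖ ^ 2)

lemma vol_ball2 (x : EuclideanSpace ℝ (Fin 2)) (r : ℝ) (hr : 0 ≤ r) :
    volume (ball x r) = ENNReal.ofReal (Real.pi * r ^ 2) := by
  rw [EuclideanSpace.volume_ball]
  simp only [Fintype.card_fin]
  norm_num
  rw [← ENNReal.ofReal_pow hr, ← ENNReal.ofReal_pow (Real.sqrt_nonneg _), Real.sq_sqrt Real.pi_nonneg,
    ← ENNReal.ofReal_mul (by positivity)]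
  ring_nf

lemma dist_ge_of_disjoint_balls {E : Type*} [NormedAddCommGroup E] [NormedSpace ℝ E]
    {x y : E} {r s : ℝ} (hr : 0 < r) (hs : 0 < s)
    (h : Disjoint (ball x r) (ball y s)) : r + s ≤ dist x y := by
  by_contra hlt
  push_neg at hlt
  set z := x + (r / (r + s)) • (y - x) with hz
  have hrs : 0 < r + s := by linarith
  have hyx : ‖y - x‖ < r + s := by rw [← dist_eq_norm, dist_comm]; exact hlt
  have h1 : z ∈ ball x r := by
    rw [mem_ball, dist_eq_norm]
    have : z - x = (r / (r + s)) • (y - x) := by rw [hz]; abel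
    rw [this, norm_smul, Real.norm_eq_abs, abs_of_pos (by positivity)]
    calc r / (r + s) * ‖y - x‖ < r / (r + s) * (r + s) :=
          mul_lt_mul_of_pos_left hyx (by positivity)
      _ = r := by field_simp
  have h2 : z ∈ ball y s := by
    rw [mem_ball, dist_eq_norm]
    have he : z - y = -((s / (r + s)) • (y - x)) := by
      rw [hz]; match_scalars <;> field_simp <;> ring
    rw [he, norm_neg, norm_smul, Real.norm_eq_abs, abs_of_pos (by positivity)]
    calc s / (r + s) * ‖y - x‖ < s / (r + s) * (r + s) :=
          mul_lt_mul_of_pos_left hyx (by positivity)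
      _ = s := by field_simp
  exact Set.disjoint_left.mp h h1 h2

lemma mu_ball_lower (p : EuclideanSpace ℝ (Fin 2)) (ρ : ℝ) (hρ : 0 < ρ)
    (hp : 1 + ρ ≤ ‖p‖) :
    ENNReal.ofReal (Real.pi / 4 * (ρ ^ 2 / ‖p‖ ^ 2)) ≤ mu (ball p ρ) := by
  have hppos : 0 < ‖p‖ := by linarith
  have key : ENNReal.ofReal (1 / (2 * ‖p‖) ^ 2) * volume (ball p ρ)
      ≤ ∫⁻ x in ball p ρ, ENNReal.ofReal (1 / ‖x‖ ^ 2) ∂volume := by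
    rw [← setLIntegral_const]
    apply setLIntegral_mono (by fun_prop)
    intro x hx
    apply ENNReal.ofReal_le_ofReal
    have h2 : ‖x - p‖ ≤ ρ := by
      rw [← dist_eq_norm]; exact (mem_ball.mp hx).le
    have hx1 : ‖x‖ ≤ 2 * ‖p‖ := by
      have := norm_le_norm_add_norm_sub' x p
      linarith
    have hx0 : (1:ℝ) ≤ ‖x‖ := by
      have := norm_sub_norm_le p x
      rw [norm_sub_rev] at this
      linarith
    apply one_div_le_one_div_of_le (by positivity)
    nlinarith
  calc ENNReal.ofReal (Real.pi / 4 * (ρ ^ 2 / ‖p‖ ^ 2))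
      = ENNReal.ofReal (1 / (2 * ‖p‖) ^ 2) * volume (ball p ρ) := by
        rw [vol_ball2 _ _ hρ.le, ← ENNReal.ofReal_mul (by positivity)]
        congr 1
        field_simp
        ring
    _ ≤ ∫⁻ x in ball p ρ, ENNReal.ofReal (1 / ‖x‖ ^ 2) ∂volume := key
    _ = mu (ball p ρ) := by rw [mu, withDensity_apply _ measurableSet_ball]

lemma exp_ge_sq_div_four {x : ℝ} (hx : 0 ≤ x) : x ^ 2 / 4 ≤ Real.exp x := by
  have h := Real.add_one_le_exp (x / 2)
  have h2 : Real.exp x = Real.exp (x / 2) * Real.exp (x / 2) := by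
    rw [← Real.exp_add]; ring_nf
  nlinarith [Real.exp_pos (x / 2)]

lemma core (d : ℕ) (hd : 2 ≤ d) (S A T : ℝ) (hS : 2 ≤ S) (hA : 0 ≤ A) (hT : 0 ≤ T)
    (hchain : Real.log (S / 2) ≤ 4 * A) (hCS : A ^ 2 ≤ d * T) (hlast : 1 / S ^ 2 ≤ T) :
    1 / 1024 * Real.log d ^ 2 / d ≤ T := by
  have hdpos : (0:ℝ) < d := by positivity
  set L := Real.log d with hLdef
  have hL : 0 < L := Real.log_pos (by exact_mod_cast hd |>.trans_lt' one_lt_two)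
  by_cases hB : L / 8 ≤ Real.log (S / 2)
  · have hA32 : L / 32 ≤ A := by linarith
    have h1 : (L / 32) ^ 2 ≤ A ^ 2 := by nlinarith
    rw [div_le_iff₀ hdpos]
    nlinarith
  · push_neg at hB
    have hSpos : (0:ℝ) < S := by linarith
    have h1 : S / 2 < Real.exp (L / 8) := by
      calc S / 2 = Real.exp (Real.log (S / 2)) := (Real.exp_log (by linarith)).symm
        _ < Real.exp (L / 8) := Real.exp_lt_exp.mpr hB
    have h2 : S ^ 2 < 4 * Real.exp (L / 4) := by
      have he : Real.exp (L / 4) = Real.exp (L / 8) * Real.exp (L / 8) := by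
        rw [← Real.exp_add]; ring_nf
      nlinarith [Real.exp_pos (L / 8)]
    have h3 : 1 / (4 * Real.exp (L / 4)) ≤ T := by
      refine le_trans ?_ hlast
      apply one_div_le_one_div_of_le (by positivity) h2.le
    have key : L ^ 2 ≤ 256 * Real.exp (3 * L / 4) := by
      nlinarith [exp_ge_sq_div_four (show (0:ℝ) ≤ 3 * L / 4 by positivity)]
    have hdL : (d:ℝ) = Real.exp L := (Real.exp_log hdpos).symm
    have hexp : Real.exp L = Real.exp (L / 4) * Real.exp (3 * L / 4) := by
      rw [← Real.exp_add]; ring_nf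
    have h4 : 1 / 1024 * L ^ 2 / d ≤ 1 / (4 * Real.exp (L / 4)) := by
      rw [div_le_div_iff₀ hdpos (by positivity), hdL, hexp]
      nlinarith [Real.exp_pos (L / 4), Real.exp_pos (3 * L / 4)]
    linarith

/-- A chain of at most `d` closed disks of radii in `(0,1]`, with pairwise disjoint
interiors, interiors disjoint from the open unit disk at the origin, the first disk
touching the closed unit disk at the origin, consecutive disks touching, and the last
disk of radius exactly `1`, has `μ`-measure at least `c₀·(ln d)²/d`. -/
theorem mu_chain_lower_bound :
    ∃ c₀ : ℝ, 0 < c₀ ∧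
      ∀ (d m : ℕ), 2 ≤ d → 1 ≤ m → m ≤ d →
      ∀ (p : ℕ → EuclideanSpace ℝ (Fin 2)) (ρ : ℕ → ℝ),
        (∀ i < m, 0 < ρ i ∧ ρ i ≤ 1) →
        ρ (m - 1) = 1 →
        (∀ i < m, ∀ j < m, i ≠ j → Disjoint (ball (p i) (ρ i)) (ball (p j) (ρ j))) →
        (∀ i < m, Disjoint (ball (p i) (ρ i))
          (ball (0 : EuclideanSpace ℝ (Fin 2)) 1)) →
        (closedBall (p 0) (ρ 0) ∩
          closedBall (0 : EuclideanSpace ℝ (Fin 2)) 1).Nonempty →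
        (∀ i, i + 1 < m →
          (closedBall (p (i + 1)) (ρ (i + 1)) ∩ closedBall (p i) (ρ i)).Nonempty) →
        ENNReal.ofReal (c₀ * (Real.log d) ^ 2 / d) ≤
          mu (⋃ i ∈ Finset.range m, closedBall (p i) (ρ i)) := by
  refine ⟨Real.pi / 4096, by positivity, ?_⟩
  intro d m hd hm hmd p ρ hρ hρm hdisj hdisj0 hfirst hcons
  obtain ⟨n, rfl⟩ : ∃ n, m = n + 1 := ⟨m - 1, (Nat.succ_pred_eq_of_pos hm).symm⟩
  simp only [Nat.add_sub_cancel] at hρm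
  set s : ℕ → ℝ := fun i => ‖p i‖ with hs
  -- basic facts
  have hsi : ∀ i < n + 1, 1 + ρ i ≤ s i := by
    intro i hi
    have := dist_ge_of_disjoint_balls (hρ i hi).1 one_pos (hdisj0 i hi)
    rw [dist_zero_right] at this
    linarith
  have hspos : ∀ i < n + 1, 0 < s i := by
    intro i hi; have := hsi i hi; have := (hρ i hi).1; linarith
  set A : ℝ := ∑ i ∈ Finset.range (n + 1), ρ i / s i with hA
  set T : ℝ := ∑ i ∈ Finset.range (n + 1), ρ i ^ 2 / s i ^ 2 with hT
  have hterm_nonneg : ∀ i ∈ Finset.range (n + 1), 0 ≤ ρ i / s i := by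
    intro i hi
    rw [Finset.mem_range] at hi
    exact div_nonneg (hρ i hi).1.le (hspos i hi).le
  have hterm2_nonneg : ∀ i ∈ Finset.range (n + 1), 0 ≤ ρ i ^ 2 / s i ^ 2 := by
    intro i hi; positivity
  have hAnn : 0 ≤ A := Finset.sum_nonneg hterm_nonneg
  have hTnn : 0 ≤ T := Finset.sum_nonneg hterm2_nonneg
  -- first disk near the unit disk
  have hs0 : s 0 ≤ 2 := by
    obtain ⟨z, hz1, hz2⟩ := hfirst
    have h1 : dist z (p 0) ≤ ρ 0 := mem_closedBall.mp hz1
    have h2 : dist z 0 ≤ 1 := mem_closedBall.mp hz2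
    have h3 : dist (p 0) 0 ≤ dist (p 0) z + dist z 0 := dist_triangle _ _ _
    have h4 : ρ 0 ≤ 1 := (hρ 0 (Nat.succ_pos n)).2
    have h5 : s 0 = dist (p 0) 0 := (dist_zero_right _).symm
    rw [dist_comm] at h1
    linarith
  -- the last disk is outside the disk of radius 2
  have hSge : 2 ≤ s n := by
    have := hsi n (Nat.lt_succ_self n)
    rw [hρm] at this; linarith
  -- chain estimate
  have hstep : ∀ i < n, Real.log (s (i + 1)) - Real.log (s i)
      ≤ ρ i / s i + 3 * (ρ (i + 1) / s (i + 1)) := by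
    intro i hi
    have hi1 : i < n + 1 := by omega
    have hi2 : i + 1 < n + 1 := by omega
    obtain ⟨z, hz1, hz2⟩ := hcons i (by omega)
    have hdist : dist (p (i + 1)) (p i) ≤ ρ (i + 1) + ρ i := by
      have h1 : dist z (p (i + 1)) ≤ ρ (i + 1) := mem_closedBall.mp hz1
      have h2 : dist z (p i) ≤ ρ i := mem_closedBall.mp hz2
      calc dist (p (i + 1)) (p i) ≤ dist (p (i + 1)) z + dist z (p i) := dist_triangle _ _ _
        _ ≤ ρ (i + 1) + ρ i := by rw [dist_comm]; exact add_le_add h1 h2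
    have hsucc : s (i + 1) ≤ s i + ρ i + ρ (i + 1) := by
      have : dist (p (i + 1)) 0 ≤ dist (p (i + 1)) (p i) + dist (p i) 0 := dist_triangle _ _ _
      simp only [dist_zero_right] at this
      have hss : s (i + 1) = ‖p (i + 1)‖ := rfl
      have hss2 : s i = ‖p i‖ := rfl
      rw [hss, hss2]; linarith
    have hp0 : 0 < s i := hspos i hi1
    have hp1 : 0 < s (i + 1) := hspos (i + 1) hi2
    have hρ0 : 0 < ρ i := (hρ i hi1).1
    have hρ1 : 0 < ρ (i + 1) := (hρ (i + 1) hi2).1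
    have hρle : ρ i ≤ 1 := (hρ i hi1).2
    have hρle1 : ρ (i + 1) ≤ 1 := (hρ (i + 1) hi2).2
    have hsil : 1 ≤ s i := by have := hsi i hi1; linarith
    have h3s : s (i + 1) ≤ 3 * s i := by linarith
    have hlog : Real.log (s (i + 1)) - Real.log (s i) ≤ (s (i + 1) - s i) / s i := by
      rw [← Real.log_div hp1.ne' hp0.ne']
      have := Real.log_le_sub_one_of_pos (show 0 < s (i + 1) / s i by positivity)
      have heq : s (i + 1) / s i - 1 = (s (i + 1) - s i) / s i := by field_simp
      linarith
    have hfrac : (s (i + 1) - s i) / s i ≤ ρ i / s i + ρ (i + 1) / s i := by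
      rw [← add_div]
      gcongr
      linarith
    have hswap : ρ (i + 1) / s i ≤ 3 * (ρ (i + 1) / s (i + 1)) := by
      rw [mul_div_assoc', div_le_div_iff₀ hp0 hp1]
      nlinarith
    linarith
  have htel : Real.log (s n) - Real.log (s 0)
      ≤ ∑ i ∈ Finset.range n, (ρ i / s i + 3 * (ρ (i + 1) / s (i + 1))) := by
    rw [← Finset.sum_range_sub (fun i => Real.log (s i)) n]
    apply Finset.sum_le_sum
    intro i hi
    exact hstep i (Finset.mem_range.mp hi)
  have hsum1 : ∑ i ∈ Finset.range n, ρ i / s i ≤ A := by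
    apply Finset.sum_le_sum_of_subset_of_nonneg
    · exact Finset.range_subset_range.mpr (by omega)
    · intro i hi _; exact hterm_nonneg i hi
  have hsum2 : ∑ i ∈ Finset.range n, ρ (i + 1) / s (i + 1) ≤ A := by
    have := Finset.sum_range_succ' (fun i => ρ i / s i) n
    have h0 : 0 ≤ ρ 0 / s 0 := hterm_nonneg 0 (Finset.mem_range.mpr (by omega))
    rw [hA]
    rw [this]
    linarith
  have hchain : Real.log (s n / 2) ≤ 4 * A := by
    have hlog2 : Real.log (s 0) ≤ Real.log 2 :=
      Real.log_le_log (hspos 0 (by omega)) hs0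
    have := htel.trans (by
      rw [Finset.sum_add_distrib, ← Finset.mul_sum]
      have := hsum2
      nlinarith [hsum1] : (∑ i ∈ Finset.range n, (ρ i / s i + 3 * (ρ (i + 1) / s (i + 1)))) ≤ 4 * A)
    rw [Real.log_div (by linarith) two_ne_zero]
    linarith
  -- Cauchy–Schwarz
  have hCS : A ^ 2 ≤ (d : ℝ) * T := by
    have h1 := sq_sum_le_card_mul_sum_sq (s := Finset.range (n + 1)) (f := fun i => ρ i / s i)
    have h2 : ∀ i ∈ Finset.range (n + 1), (ρ i / s i) ^ 2 = ρ i ^ 2 / s i ^ 2 := by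
      intro i _; rw [div_pow]
    rw [Finset.sum_congr rfl h2] at h1
    have hcard : ((Finset.range (n + 1)).card : ℝ) ≤ (d : ℝ) := by
      simp only [Finset.card_range]
      exact_mod_cast hmd
    calc A ^ 2 ≤ ((Finset.range (n + 1)).card : ℝ) * T := by exact_mod_cast h1
      _ ≤ (d : ℝ) * T := by nlinarith
  have hlast : 1 / (s n) ^ 2 ≤ T := by
    have := Finset.single_le_sum hterm2_nonneg (Finset.mem_range.mpr (Nat.lt_succ_self n))
    rw [hρm] at this
    simpa using this
  have hcore := core d hd (s n) A T hSge hAnn hTnn hchain hCS hlast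
  -- measure computation
  have hmeas : ∑ i ∈ Finset.range (n + 1), ENNReal.ofReal (Real.pi / 4 * (ρ i ^ 2 / s i ^ 2))
      ≤ mu (⋃ i ∈ Finset.range (n + 1), closedBall (p i) (ρ i)) := by
    calc ∑ i ∈ Finset.range (n + 1), ENNReal.ofReal (Real.pi / 4 * (ρ i ^ 2 / s i ^ 2))
        ≤ ∑ i ∈ Finset.range (n + 1), mu (ball (p i) (ρ i)) := by
          apply Finset.sum_le_sum
          intro i hi
          rw [Finset.mem_range] at hi
          exact mu_ball_lower (p i) (ρ i) (hρ i hi).1 (hsi i hi)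
      _ = mu (⋃ i ∈ Finset.range (n + 1), ball (p i) (ρ i)) := by
          rw [measure_biUnion_finset ?_ (fun i _ => measurableSet_ball)]
          intro i hi j hj hij
          exact hdisj i (Finset.mem_range.mp hi) j (Finset.mem_range.mp hj) hij
      _ ≤ mu (⋃ i ∈ Finset.range (n + 1), closedBall (p i) (ρ i)) := by
          apply measure_mono
          apply Set.iUnion₂_mono
          intro i _
          exact ball_subset_closedBall
  have hofreal : ENNReal.ofReal (Real.pi / 4 * T)
      = ∑ i ∈ Finset.range (n + 1), ENNReal.ofReal (Real.pi / 4 * (ρ i ^ 2 / s i ^ 2)) := by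
    rw [hT, Finset.mul_sum, ENNReal.ofReal_sum_of_nonneg]
    intro i hi
    have := hterm2_nonneg i hi
    positivity
  calc ENNReal.ofReal (Real.pi / 4096 * Real.log d ^ 2 / d)
      ≤ ENNReal.ofReal (Real.pi / 4 * T) := by
        apply ENNReal.ofReal_le_ofReal
        have hdpos : (0:ℝ) < d := by positivity
        have hpi := Real.pi_pos
        rw [div_le_iff₀ hdpos] at hcore ⊢
        nlinarith
    _ = _ := hofreal
    _ ≤ _ := hmeas
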